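/- Let G be a finite simple split graph on n vertices with vertex partition into a clique Q with |Q| ≥ 2 and a nonempty stable set S, with Q totally ordered v_1 < v_2 < ... < v_r and partitioned into consecutive segments Q_l = {v_1,...,v_p}, Q_r = {v_q,...,v_r}, Q_t = Q \ (Q_l ∪ Q_r), such that every s ∈ S has neighborhood of one of the forms (i) {v_1,...,v_i} with i ≤ p, (ii) {v_j,...,v_r} with q ≤ j ≤ r, or (iii) {v_1,...,v_i} ∪ {v_j,...,v_r} with i ≤ p and q ≤ j ≤ r; let S_l, S_r, S_t be the sets of vertices of S of forms (i), (ii), (iii) respectively, and assume p = |N(S_l)| and |N(S_r)| = r - q + 1. If |S_l| ≥ |S_r|, then Δ(G) = n - |S_r| - 1. -/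

import Mathlib

/-! Basic definitions for edge coloring and split/comparability graphs. -/

variable {V : Type*}

/-- The degree of a vertex. -/
noncomputable def deg (G : SimpleGraph V) (x : V) : ℕ := (G.neighborSet x).ncard

/-- The maximum degree Δ(G). -/
noncomputable def maxDeg (G : SimpleGraph V) : ℕ := sSup (Set.range (deg G))

/-- A proper edge coloring: distinct edges sharing an endpoint get distinct colors. -/
def IsProperEdgeColoring (G : SimpleGraph V) (c : Sym2 V → ℕ) : Prop :=
  ∀ e ∈ G.edgeSet, ∀ f ∈ G.edgeSet, e ≠ f → (∃ x, x ∈ e ∧ x ∈ f) → c e ≠ c f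

/-- `G` has a proper edge coloring with `k` colors. -/
def HasProperEdgeColoring (G : SimpleGraph V) (k : ℕ) : Prop :=
  ∃ c : Sym2 V → ℕ, (∀ e ∈ G.edgeSet, c e < k) ∧ IsProperEdgeColoring G c

/-- The chromatic index χ'(G). -/
noncomputable def chromIndex (G : SimpleGraph V) : ℕ :=
  sInf {k | HasProperEdgeColoring G k}

/-- An edge coloring with colors `< k` is balanced if any two color classes
differ in cardinality by at most 1. -/
def BalancedEdgeColoring (G : SimpleGraph V) (c : Sym2 V → ℕ) (k : ℕ) : Prop :=
  ∀ i < k, ∀ j < k,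
    {e | e ∈ G.edgeSet ∧ c e = i}.ncard ≤ {e | e ∈ G.edgeSet ∧ c e = j}.ncard + 1

/-- A graph is overfull if it has an odd number `n` of vertices and
`m > (n - 1) * Δ / 2` edges. -/
def Overfull (G : SimpleGraph V) : Prop :=
  Odd (Nat.card V) ∧ (Nat.card V - 1) * maxDeg G < 2 * G.edgeSet.ncard

/-- A graph is neighborhood-overfull if the subgraph induced by the closed
neighborhood of some maximum-degree vertex is overfull. -/
def NeighborhoodOverfull (G : SimpleGraph V) : Prop :=
  ∃ x : V, deg G x = maxDeg G ∧ Overfull (G.induce (G.neighborSet x ∪ {x}))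

/-- A graph is subgraph-overfull if it has a subgraph of the same maximum degree
that is overfull. -/
def SubgraphOverfull (G : SimpleGraph V) : Prop :=
  ∃ H : G.Subgraph, maxDeg H.coe = maxDeg G ∧ Overfull H.coe

/-- A graph is saturated if it has an odd number of vertices and its complement
has exactly Δ(G)/2 edges. -/
def Saturated (G : SimpleGraph V) : Prop :=
  Odd (Nat.card V) ∧ 2 * (Gᶜ.edgeSet.ncard) = maxDeg G

/-- `Q`, `S` form a split partition of `G`: a partition of the vertices into a
clique `Q` and a stable set `S`. -/
def IsSplitPartition (G : SimpleGraph V) (Q S : Set V) : Prop :=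
  Q ∪ S = Set.univ ∧ Disjoint Q S ∧ G.IsClique Q ∧ ∀ a ∈ S, ∀ b ∈ S, ¬ G.Adj a b

/-- A split graph. -/
def IsSplit (G : SimpleGraph V) : Prop := ∃ Q S : Set V, IsSplitPartition G Q S

/-- A comparability graph: one admitting a transitive orientation of its edges,
i.e. the comparability graph of a strict partial order. -/
def IsComparability (G : SimpleGraph V) : Prop :=
  ∃ r : V → V → Prop, (∀ a, ¬ r a a) ∧ (∀ a b c, r a b → r b c → r a c) ∧
    (∀ a b, G.Adj a b ↔ (r a b ∨ r b a))

/-- Form (i): `N(s) = {v_1, …, v_i}` for some `1 ≤ i ≤ p`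
(vertices `v_1, …, v_r` being `v 0, …, v (r-1)`). -/
def FormL {r : ℕ} (G : SimpleGraph V) (v : Fin r → V) (p : ℕ) (s : V) : Prop :=
  ∃ i, 1 ≤ i ∧ i ≤ p ∧ G.neighborSet s = v '' {j : Fin r | (j : ℕ) < i}

/-- Form (ii): `N(s) = {v_j, …, v_r}` for some `q ≤ j ≤ r`. -/
def FormR {r : ℕ} (G : SimpleGraph V) (v : Fin r → V) (q : ℕ) (s : V) : Prop :=
  ∃ j, q ≤ j ∧ j ≤ r ∧ G.neighborSet s = v '' {k : Fin r | j ≤ (k : ℕ) + 1}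

/-- Form (iii): `N(s) = {v_1, …, v_i} ∪ {v_j, …, v_r}` for some `1 ≤ i ≤ p`,
`q ≤ j ≤ r`. -/
def FormT {r : ℕ} (G : SimpleGraph V) (v : Fin r → V) (p q : ℕ) (s : V) : Prop :=
  ∃ i j, 1 ≤ i ∧ i ≤ p ∧ q ≤ j ∧ j ≤ r ∧
    G.neighborSet s = v '' {k : Fin r | (k : ℕ) < i} ∪ v '' {k : Fin r | j ≤ (k : ℕ) + 1}

/-- In a split graph on `n` vertices with the
split-comparability structure, `|Q| ≥ 2`, `S` nonempty and `|S_l| ≥ |S_r|`,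
the maximum degree satisfies `Δ(G) = n - |S_r| - 1`. -/
theorem maxDeg_eq_card_sub_Sr
    [Fintype V] (G : SimpleGraph V) (Q S : Set V)
    (hsplit : IsSplitPartition G Q S)
    (r : ℕ) (v : Fin r → V) (hv : Function.Injective v) (hvQ : Set.range v = Q)
    (p q : ℕ) (hpr : p ≤ r) (hpq : p < q) (hqr : q ≤ r + 1)
    (hforms : ∀ s ∈ S, FormL G v p s ∨ FormR G v q s ∨ FormT G v p q s)
    (Sl Sr St : Set V)
    (hSl : Sl = {s ∈ S | FormL G v p s})
    (hSr : Sr = {s ∈ S | FormR G v q s})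
    (hSt : St = {s ∈ S | FormT G v p q s})
    (hNSl : (⋃ s ∈ Sl, G.neighborSet s).ncard = p)
    (hNSr : (⋃ s ∈ Sr, G.neighborSet s).ncard = r + 1 - q)
    (hQ2 : 2 ≤ Q.ncard) (hSne : S.Nonempty)
    (hlr : Sr.ncard ≤ Sl.ncard) :
    maxDeg G = Fintype.card V - Sr.ncard - 1 := by
  obtain ⟨hQS, hdQS, hclique, hstable⟩ := hsplit
  classical
  -- |Q| = r, hence r ≥ 2
  have hQcard : Q.ncard = r := by
    rw [← hvQ, ← Set.image_univ, Set.ncard_image_of_injective _ hv, Set.ncard_univ,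
      Nat.card_eq_fintype_card, Fintype.card_fin]
  have hr2 : 2 ≤ r := hQcard ▸ hQ2
  have hr0 : 0 < r := by omega
  set v0 : V := v ⟨0, hr0⟩ with hv0def
  have hv0Q : v0 ∈ Q := hvQ ▸ Set.mem_range_self _
  -- p ≥ 1
  have hp1 : 1 ≤ p := by
    by_contra hp
    have hp0 : p = 0 := by omega
    have hSl0 : Sl = ∅ := by
      rw [hSl]
      ext s
      simp only [Set.mem_setOf_eq, Set.mem_empty_iff_false, iff_false, not_and]
      rintro _ ⟨i, hi1, hip, _⟩
      omega
    have hSr0 : Sr = ∅ := by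
      have h1 : Sr.ncard = 0 := by
        have := hlr
        rw [hSl0, Set.ncard_empty] at this
        omega
      exact (Set.ncard_eq_zero (Set.toFinite _)).mp h1
    obtain ⟨s, hs⟩ := hSne
    rcases hforms s hs with ⟨i, hi1, hip, _⟩ | hR | ⟨i, j, hi1, hip, _⟩
    · omega
    · have : s ∈ Sr := by rw [hSr]; exact ⟨hs, hR⟩
      rw [hSr0] at this; exact this
    · omega
  -- members of Sr are not adjacent to v0
  have hSrNotAdj : ∀ s ∈ Sr, v0 ∉ G.neighborSet s := by
    intro s hsr hmem
    rw [hSr] at hsr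
    obtain ⟨hsS, j, hqj, hjr, hN⟩ := hsr
    rw [hN, hv.mem_set_image, Set.mem_setOf_eq] at hmem
    simp only at hmem
    omega
  -- members of S \ Sr are adjacent to v0
  have hSdAdj : ∀ s ∈ S \ Sr, v0 ∈ G.neighborSet s := by
    rintro s ⟨hsS, hsr⟩
    have hnR : ¬ FormR G v q s := fun h => hsr (by rw [hSr]; exact ⟨hsS, h⟩)
    rcases hforms s hsS with ⟨i, hi1, hip, hN⟩ | hR | ⟨i, j, hi1, hip, hqj, hjr, hN⟩
    · rw [hN, hv.mem_set_image, Set.mem_setOf_eq]; simpa using Nat.lt_of_lt_of_le Nat.zero_lt_one hi1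
    · exact absurd hR hnR
    · rw [hN]
      left
      rw [hv.mem_set_image, Set.mem_setOf_eq]; simpa using Nat.lt_of_lt_of_le Nat.zero_lt_one hi1
  -- Sl and St avoid Sr
  have hSlsub : Sl ⊆ S \ Sr := by
    intro s hs
    rw [hSl] at hs
    obtain ⟨hsS, i, hi1, hip, hN⟩ := hs
    refine ⟨hsS, fun hsr => hSrNotAdj s hsr ?_⟩
    rw [hN, hv.mem_set_image, Set.mem_setOf_eq]; simpa using Nat.lt_of_lt_of_le Nat.zero_lt_one hi1
  have hStsub : St ⊆ S \ Sr := by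
    intro s hs
    rw [hSt] at hs
    obtain ⟨hsS, i, j, hi1, hip, hqj, hjr, hN⟩ := hs
    refine ⟨hsS, fun hsr => hSrNotAdj s hsr ?_⟩
    rw [hN]
    left
    rw [hv.mem_set_image, Set.mem_setOf_eq]; simpa using Nat.lt_of_lt_of_le Nat.zero_lt_one hi1
  -- neighborhood of v0
  have hNv0 : G.neighborSet v0 = (Q \ {v0}) ∪ (S \ Sr) := by
    ext x
    constructor
    · intro hx
      have hxU : x ∈ Q ∪ S := hQS ▸ Set.mem_univ x
      rcases hxU with hxQ | hxS
      · exact Or.inl ⟨hxQ, by simpa using (G.ne_of_adj hx).symm⟩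
      · refine Or.inr ⟨hxS, fun hxr => hSrNotAdj x hxr ?_⟩
        exact (G.mem_neighborSet _ _).mpr hx.symm
    · rintro (⟨hxQ, hne⟩ | hxd)
      · have : v0 ≠ x := fun h => hne (by simp [h.symm])
        exact hclique hv0Q hxQ this
      · exact ((G.mem_neighborSet _ _).mpr (hSdAdj x hxd)).symm
  have hQdiff : (Q \ {v0}).ncard = r - 1 := by
    rw [Set.ncard_diff_singleton_of_mem hv0Q, hQcard]
  have hdisjQS' : Disjoint (Q \ {v0}) (S \ Sr) :=
    (hdQS.mono (Set.diff_subset) (Set.diff_subset))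
  have hdegv0 : deg G v0 = (r - 1) + (S \ Sr).ncard := by
    rw [deg, hNv0, Set.ncard_union_eq hdisjQS' (Set.toFinite _) (Set.toFinite _), hQdiff]
  -- S \ Sr is nonempty
  have hSSr1 : 1 ≤ (S \ Sr).ncard := by
    rcases Set.eq_empty_or_nonempty Sr with h | h
    · have : (S \ Sr) = S := by rw [h, Set.diff_empty]
      rw [this]
      exact (Set.ncard_pos (Set.toFinite _)).mpr hSne
    · have h1 : 1 ≤ Sr.ncard := (Set.ncard_pos (Set.toFinite _)).mpr h
      have h2 : Sl.ncard ≤ (S \ Sr).ncard := Set.ncard_le_ncard hSlsub (Set.toFinite _)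
      omega
  -- key cardinality bound, valid when q ≤ r
  have hkey : q ≤ r → (Sr ∪ St).ncard ≤ (S \ Sr).ncard := by
    intro hq_r
    have hSlSt : Disjoint Sl St := by
      rw [Set.disjoint_left]
      intro s hsl hst
      rw [hSl] at hsl
      rw [hSt] at hst
      obtain ⟨hsS, i, hi1, hip, hN⟩ := hsl
      obtain ⟨_, i', j, hi1', hip', hqj, hjr, hN'⟩ := hst
      have hmem : v ⟨r - 1, by omega⟩ ∈ G.neighborSet s := by
        rw [hN']
        right
        rw [hv.mem_set_image, Set.mem_setOf_eq]
        simp only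
        omega
      rw [hN, hv.mem_set_image, Set.mem_setOf_eq] at hmem
      simp only at hmem
      omega
    calc (Sr ∪ St).ncard ≤ Sr.ncard + St.ncard := Set.ncard_union_le _ _
      _ ≤ Sl.ncard + St.ncard := by omega
      _ = (Sl ∪ St).ncard := (Set.ncard_union_eq hSlSt (Set.toFinite _) (Set.toFinite _)).symm
      _ ≤ (S \ Sr).ncard := Set.ncard_le_ncard (Set.union_subset hSlsub hStsub) (Set.toFinite _)
  -- the upper bound on all degrees
  have hub : ∀ x, deg G x ≤ (r - 1) + (S \ Sr).ncard := by
    intro x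
    have hxU : x ∈ Q ∪ S := hQS ▸ Set.mem_univ x
    rcases hxU with hxQ | hxS
    · -- x = v k
      obtain ⟨k, hk⟩ : ∃ k, v k = x := by rwa [← hvQ, Set.mem_range] at hxQ
      have hsub : G.neighborSet x ⊆ (Q \ {x}) ∪ (G.neighborSet x ∩ S) := by
        intro y hy
        have hyU : y ∈ Q ∪ S := hQS ▸ Set.mem_univ y
        rcases hyU with hyQ | hyS
        · exact Or.inl ⟨hyQ, by simpa using (G.ne_of_adj hy).symm⟩
        · exact Or.inr ⟨hy, hyS⟩
      have hQd : (Q \ {x}).ncard = r - 1 := by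
        rw [Set.ncard_diff_singleton_of_mem hxQ, hQcard]
      have h1 : deg G x ≤ (r - 1) + (G.neighborSet x ∩ S).ncard := by
        calc deg G x ≤ ((Q \ {x}) ∪ (G.neighborSet x ∩ S)).ncard :=
              Set.ncard_le_ncard hsub (Set.toFinite _)
          _ ≤ (Q \ {x}).ncard + (G.neighborSet x ∩ S).ncard := Set.ncard_union_le _ _
          _ = (r - 1) + (G.neighborSet x ∩ S).ncard := by rw [hQd]
      have h2 : (G.neighborSet x ∩ S).ncard ≤ (S \ Sr).ncard := by
        by_cases hcase : (k : ℕ) + 1 < q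
        · refine Set.ncard_le_ncard ?_ (Set.toFinite _)
          rintro s ⟨hsN, hsS⟩
          refine ⟨hsS, fun hsr => ?_⟩
          rw [hSr] at hsr
          obtain ⟨_, j, hqj, hjr, hN⟩ := hsr
          have hxN : x ∈ G.neighborSet s := (G.mem_neighborSet _ _).mpr
            ((G.mem_neighborSet _ _).mp hsN).symm
          rw [← hk, hN, hv.mem_set_image, Set.mem_setOf_eq] at hxN
          omega
        · push_neg at hcase
          have hq_r : q ≤ r := by have := k.isLt; omega
          have hsub2 : G.neighborSet x ∩ S ⊆ Sr ∪ St := by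
            rintro s ⟨hsN, hsS⟩
            have hxN : x ∈ G.neighborSet s := (G.mem_neighborSet _ _).mpr
              ((G.mem_neighborSet _ _).mp hsN).symm
            rcases hforms s hsS with ⟨i, hi1, hip, hN⟩ | hR | hT
            · exfalso
              rw [← hk, hN, hv.mem_set_image, Set.mem_setOf_eq] at hxN
              omega
            · exact Or.inl (by rw [hSr]; exact ⟨hsS, hR⟩)
            · exact Or.inr (by rw [hSt]; exact ⟨hsS, hT⟩)
          exact le_trans (Set.ncard_le_ncard hsub2 (Set.toFinite _)) (hkey hq_r)
      omega
    · -- x ∈ S : degree ≤ r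
      have hsub : G.neighborSet x ⊆ Q := by
        rcases hforms x hxS with ⟨i, hi1, hip, hN⟩ | ⟨j, hqj, hjr, hN⟩ | ⟨i, j, _, _, _, _, hN⟩
        · rw [hN, ← hvQ]; exact Set.image_subset_range _ _
        · rw [hN, ← hvQ]; exact Set.image_subset_range _ _
        · rw [hN, ← hvQ]
          exact Set.union_subset (Set.image_subset_range _ _) (Set.image_subset_range _ _)
      have : deg G x ≤ r := hQcard ▸ Set.ncard_le_ncard hsub (Set.toFinite _)
      omega
  -- maxDeg is the degree of v0
  have hmax : maxDeg G = deg G v0 := by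
    apply le_antisymm
    · have hne : (Set.range (deg G)).Nonempty := ⟨deg G v0, v0, rfl⟩
      apply csSup_le hne
      rintro d ⟨x, rfl⟩
      rw [hdegv0]
      exact hub x
    · refine le_csSup ⟨(r - 1) + (S \ Sr).ncard, ?_⟩ ⟨v0, rfl⟩
      rintro d ⟨x, rfl⟩
      exact hub x
  -- final arithmetic
  have hSrS : Sr ⊆ S := by rw [hSr]; exact Set.sep_subset _ _
  have hcardV : Fintype.card V = Q.ncard + S.ncard := by
    rw [← Set.ncard_union_eq hdQS (Set.toFinite _) (Set.toFinite _), hQS, Set.ncard_univ,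
      Nat.card_eq_fintype_card]
  have hdiffcard : (S \ Sr).ncard = S.ncard - Sr.ncard :=
    Set.ncard_diff hSrS (Set.toFinite _)
  have hSrle : Sr.ncard ≤ S.ncard := Set.ncard_le_ncard hSrS (Set.toFinite _)
  rw [hmax, hdegv0, hcardV, hQcard, hdiffcard]
  omega
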